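/- Let λ ∈ C with λ ∉ ℕ. Then the sl_2 Verma module M(λ) is a simple sl_2-module: every nonzero submodule equals M(λ). -/

import Mathlib

/-- f·v_i = (i+1) v_{i+1} on the Verma module M(λ) with basis v_i = single i 1. -/
noncomputable def Fop : (ℕ →₀ ℂ) →ₗ[ℂ] (ℕ →₀ ℂ) :=
  Finsupp.lsum ℂ fun i => ((i : ℂ) + 1) • Finsupp.lsingle (i + 1)

/-- e·v_i = (λ+1-i) v_{i-1} (with v_{-1} = 0). -/
noncomputable def Eop (lam : ℂ) : (ℕ →₀ ℂ) →ₗ[ℂ] (ℕ →₀ ℂ) :=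
  Finsupp.lsum ℂ fun i => if i = 0 then 0 else (lam + 1 - i) • Finsupp.lsingle (i - 1)

/-- h·v_i = (λ-2i) v_i. -/
noncomputable def Hop (lam : ℂ) : (ℕ →₀ ℂ) →ₗ[ℂ] (ℕ →₀ ℂ) :=
  Finsupp.lsum ℂ fun i => (lam - 2 * i) • Finsupp.lsingle i

/-- On the dual DM(λ): e·v_i* = i v_{i-1}*. -/
noncomputable def Ed : (ℕ →₀ ℂ) →ₗ[ℂ] (ℕ →₀ ℂ) :=
  Finsupp.lsum ℂ fun i => (i : ℂ) • Finsupp.lsingle (i - 1)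

/-- On the dual DM(λ): f·v_i* = (λ-i) v_{i+1}*. -/
noncomputable def Fd (lam : ℂ) : (ℕ →₀ ℂ) →ₗ[ℂ] (ℕ →₀ ℂ) :=
  Finsupp.lsum ℂ fun i => (lam - i) • Finsupp.lsingle (i + 1)

/-- Generalized binomial coefficient C(λ,i) = λ(λ-1)⋯(λ-i+1)/i!. -/
noncomputable def gbinom (lam : ℂ) (i : ℕ) : ℂ :=
  (∏ j ∈ Finset.range i, (lam - j)) / (Nat.factorial i : ℂ)

/-- φ_λ(v_i) = C(λ,i) v_i*. -/
noncomputable def phiMap (lam : ℂ) : (ℕ →₀ ℂ) →ₗ[ℂ] (ℕ →₀ ℂ) :=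
  Finsupp.lsum ℂ fun i => gbinom lam i • Finsupp.lsingle i

/-- ψ_λ(v_i*) = 0 for i ≤ λ, (-1)^i C(i,i-λ-1) v_i for i > λ. -/
noncomputable def psiMap (n : ℕ) : (ℕ →₀ ℂ) →ₗ[ℂ] (ℕ →₀ ℂ) :=
  Finsupp.lsum ℂ fun i =>
    (if i ≤ n then (0 : ℂ) else (-1) ^ i * (Nat.choose i (i - n - 1) : ℂ)) • Finsupp.lsingle i

lemma Eop_apply (lam : ℂ) (x : ℕ →₀ ℂ) (j : ℕ) :
    Eop lam x (j) = (lam - j) * x (j + 1) := by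
  induction x using Finsupp.induction_linear with
  | zero => simp
  | add f g hf hg => simp [hf, hg, mul_add]
  | single i c =>
    rw [Eop, Finsupp.lsum_single]
    by_cases hi : i = 0
    · subst hi; simp
    · simp only [if_neg hi, LinearMap.smul_apply, Finsupp.lsingle_apply,
        Finsupp.smul_single, smul_eq_mul]
      by_cases h : i = j + 1
      · subst h
        simp [Finsupp.single_apply]
      · rw [Finsupp.single_apply, Finsupp.single_apply, if_neg (by omega), if_neg h]
        simp

lemma Fop_single (i : ℕ) : Fop (Finsupp.single i 1) = Finsupp.single (i + 1) ((i : ℂ) + 1) := by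
  rw [Fop, Finsupp.lsum_single]
  simp

/-- For λ ∉ ℕ the Verma module M(λ) is a simple sl₂-module: every subspace invariant
under e, f, h is 0 or all of M(λ). -/
theorem verma_simple_of_not_nat (lam : ℂ) (hlam : ∀ n : ℕ, lam ≠ n) :
    ∀ p : Submodule ℂ (ℕ →₀ ℂ),
      (∀ x ∈ p, Eop lam x ∈ p ∧ Fop x ∈ p ∧ Hop lam x ∈ p) →
      p = ⊥ ∨ p = ⊤ := by
  intro p hp
  by_cases hbot : p = ⊥
  · exact Or.inl hbot
  right
  -- get a nonzero element
  obtain ⟨x, hxp, hx0⟩ : ∃ x ∈ p, x ≠ 0 := by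
    by_contra h
    push_neg at h
    exact hbot (le_antisymm (fun y hy => by simpa using h y hy) bot_le)
  -- step 1: single 0 1 ∈ p
  have key : ∀ n : ℕ, ∀ y ∈ p, y ≠ 0 → (∀ i, n < i → y i = 0) →
      (Finsupp.single 0 (1:ℂ) : ℕ →₀ ℂ) ∈ p := by
    intro n
    induction n with
    | zero =>
      intro y hyp hy0 hbd
      have hy : y = Finsupp.single 0 (y 0) := by
        ext j
        rcases Nat.eq_zero_or_pos j with hj | hj
        · subst hj; simp
        · rw [Finsupp.single_apply, if_neg (by omega), hbd j hj]
      have h0 : y 0 ≠ 0 := by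
        intro h
        apply hy0
        rw [hy, h, Finsupp.single_zero]
      have : (y 0)⁻¹ • y ∈ p := p.smul_mem _ hyp
      rw [hy] at this
      simp only [Finsupp.smul_single, smul_eq_mul, Finsupp.single_eq_same] at this
      rwa [inv_mul_cancel₀ h0] at this
    | succ n ih =>
      intro y hyp hy0 hbd
      by_cases htop : y (n + 1) = 0
      · exact ih y hyp hy0 (fun i hi => by
          rcases Nat.lt_or_ge (n+1) i with h | h
          · exact hbd i h
          · have : i = n + 1 := by omega
            rwa [this])
      · set z := Eop lam y with hz
        have hzp : z ∈ p := (hp y hyp).1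
        have hzn : z n = (lam - n) * y (n + 1) := Eop_apply lam y n
        have hlamn : lam - n ≠ 0 := sub_ne_zero.mpr (hlam n)
        have hzn0 : z n ≠ 0 := by rw [hzn]; exact mul_ne_zero hlamn htop
        have hz0 : z ≠ 0 := fun h => hzn0 (by rw [h]; simp)
        refine ih z hzp hz0 (fun i hi => ?_)
        rw [hz, Eop_apply, hbd (i+1) (by omega), mul_zero]
  have h01 : (Finsupp.single 0 (1:ℂ) : ℕ →₀ ℂ) ∈ p := by
    obtain ⟨n, hn⟩ : ∃ n, ∀ i, n < i → x i = 0 := by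
      rcases x.support.bddAbove with ⟨n, hn⟩
      exact ⟨n, fun i hi => Finsupp.notMem_support_iff.mp (fun h => by
        have := hn h; omega)⟩
    exact key n x hxp hx0 hn
  -- step 2: all singles are in p
  have hsingle : ∀ i : ℕ, (Finsupp.single i (1:ℂ) : ℕ →₀ ℂ) ∈ p := by
    intro i
    induction i with
    | zero => exact h01
    | succ i ih =>
      have hf : Fop (Finsupp.single i 1) ∈ p := (hp _ ih).2.1
      rw [Fop_single] at hf
      have hne : ((i : ℂ) + 1) ≠ 0 := by
        exact_mod_cast Nat.cast_add_one_ne_zero (R := ℂ) i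
      have := p.smul_mem ((i : ℂ) + 1)⁻¹ hf
      rwa [Finsupp.smul_single, smul_eq_mul, inv_mul_cancel₀ hne] at this
  -- step 3: p = ⊤
  rw [Submodule.eq_top_iff']
  intro y
  induction y using Finsupp.induction with
  | zero => exact p.zero_mem
  | single_add a b f _ _ ihf =>
    refine p.add_mem ?_ ihf
    have := p.smul_mem b (hsingle a)
    rwa [Finsupp.smul_single, smul_eq_mul, mul_one] at this
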